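/- arXiv:1407.6531 — 6 statements merged into one kernel-verified Lean document; each statement's English description precedes it below -/
import Mathlib

section
/- Let T be a tree whose vertices may be labelled with labels x and y (each vertex may receive one label, both, or none). Then exactly one of the following holds: (1) T contains two vertex-disjoint paths, each from a vertex with label x to a vertex with label y (paths of length 0 allowed); or (2) there exists a vertex v and two subtrees T_x and T_y of T with V(T_x) ∪ V(T_y) = V(T), V(T_x) ∩ V(T_y) = {v}, such that T_x contains all vertices with label x and T_y contains all vertices with label y. -/
namespace TreeHelly

open SimpleGraph

variable {V : Type*} [DecidableEq V] (T : SimpleGraph V)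

noncomputable def pth (hT : T.IsTree) (c d : V) : T.Walk c d :=
  (hT.existsUnique_path c d).exists.choose

lemma pth_isPath (hT : T.IsTree) (c d : V) : (pth T hT c d).IsPath :=
  (hT.existsUnique_path c d).exists.choose_spec

lemma eq_pth (hT : T.IsTree) {c d : V} {p : T.Walk c d} (hp : p.IsPath) :
    p = pth T hT c d :=
  (hT.existsUnique_path c d).unique hp (pth_isPath T hT c d)

lemma pth_support_subset (hT : T.IsTree) {c d : V} (p : T.Walk c d) :
    (pth T hT c d).support ⊆ p.support := by
  rw [← eq_pth T hT p.bypass_isPath]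
  exact p.support_bypass_subset

lemma pth_length (hT : T.IsTree) (c d : V) : (pth T hT c d).length = T.dist c d := by
  refine le_antisymm ?_ (SimpleGraph.dist_le _)
  obtain ⟨p, hp⟩ := hT.isConnected.exists_walk_length_eq_dist c d
  calc (pth T hT c d).length = p.bypass.length := by rw [← eq_pth T hT p.bypass_isPath]
    _ ≤ p.length := p.length_bypass_le
    _ = T.dist c d := hp

def Bet (c v d : V) : Prop := T.dist c v + T.dist v d = T.dist c d

lemma bet_def {c v d : V} : Bet T c v d ↔ T.dist c v + T.dist v d = T.dist c d := Iff.rfl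

lemma bet_symm {c v d : V} (h : Bet T c v d) : Bet T d v c := by
  rw [bet_def] at *
  have h1 : T.dist c v = T.dist v c := SimpleGraph.dist_comm
  have h2 : T.dist v d = T.dist d v := SimpleGraph.dist_comm
  have h3 : T.dist c d = T.dist d c := SimpleGraph.dist_comm
  omega

lemma bet_of_mem (hT : T.IsTree) {c d v : V} (h : v ∈ (pth T hT c d).support) :
    Bet T c v d := by
  have h1 : ((pth T hT c d).takeUntil v h).IsPath := (pth_isPath T hT c d).takeUntil h
  have h2 : ((pth T hT c d).dropUntil v h).IsPath := (pth_isPath T hT c d).dropUntil h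
  have e1 := pth_length T hT c v
  rw [← eq_pth T hT h1] at e1
  have e2 := pth_length T hT v d
  rw [← eq_pth T hT h2] at e2
  have e3 := pth_length T hT c d
  have e4 : ((pth T hT c d).takeUntil v h).length + ((pth T hT c d).dropUntil v h).length
      = (pth T hT c d).length := by
    rw [← Walk.length_append, Walk.take_spec]
  rw [bet_def]
  omega

lemma exists_median [Fintype V] (hT : T.IsTree) (x y z : V) :
    ∃ m, m ∈ (pth T hT x y).support ∧ Bet T x m y ∧ Bet T x m z ∧ Bet T y m z := by
  classical
  obtain ⟨m, hm, hmax⟩ := Finset.exists_max_image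
    (Finset.univ.filter (fun w => w ∈ (pth T hT x y).support ∧ w ∈ (pth T hT x z).support))
    (fun w => T.dist x w)
    ⟨x, by simp [Walk.start_mem_support]⟩
  simp only [Finset.mem_filter, Finset.mem_univ, true_and] at hm hmax
  obtain ⟨hmP, hmQ⟩ := hm
  have key : ∀ w, w ∈ ((pth T hT x y).dropUntil m hmP).support →
      w ∈ ((pth T hT x z).dropUntil m hmQ).support → w = m := by
    intro w hw1 hw2
    have hw1' : w ∈ (pth T hT x y).support := (pth T hT x y).support_dropUntil_subset hmP hw1
    have hw2' : w ∈ (pth T hT x z).support := (pth T hT x z).support_dropUntil_subset hmQ hw2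
    have hle : T.dist x w ≤ T.dist x m := hmax w ⟨hw1', hw2'⟩
    have hdm : ((pth T hT x y).dropUntil m hmP) = pth T hT m y :=
      eq_pth T hT ((pth_isPath T hT x y).dropUntil hmP)
    have hbmw : Bet T m w y := bet_of_mem T hT (hdm ▸ hw1)
    have b1 : Bet T x w y := bet_of_mem T hT hw1'
    have b2 : Bet T x m y := bet_of_mem T hT hmP
    have hd0 : T.dist m w = 0 := by rw [bet_def] at *; omega
    exact ((hT.isConnected.dist_eq_zero_iff).mp hd0).symm
  have hW : (((pth T hT x y).dropUntil m hmP).reverse.append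
      ((pth T hT x z).dropUntil m hmQ)).IsPath := by
    rw [Walk.isPath_def, Walk.support_append, List.nodup_append]
    have n1 : ((pth T hT x y).dropUntil m hmP).support.Nodup :=
      ((pth_isPath T hT x y).dropUntil hmP).support_nodup
    have n2 : ((pth T hT x z).dropUntil m hmQ).support.Nodup :=
      ((pth_isPath T hT x z).dropUntil hmQ).support_nodup
    refine ⟨by rw [Walk.support_reverse]; exact List.nodup_reverse.mpr n1, n2.tail, ?_⟩
    intro w hw1 w₂ hw2 hww
    subst hww
    rw [Walk.support_reverse, List.mem_reverse] at hw1
    have hw2' : w ∈ ((pth T hT x z).dropUntil m hmQ).support := List.mem_of_mem_tail hw2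
    have : w = m := key w hw1 hw2'
    subst this
    have := Walk.support_eq_cons ((pth T hT x z).dropUntil w hmQ)
    rw [this] at n2
    exact (List.nodup_cons.mp n2).1 hw2
  have heq := eq_pth T hT hW
  have hmem : m ∈ (pth T hT y z).support := by
    rw [← heq, Walk.mem_support_append_iff]
    left
    rw [Walk.support_reverse, List.mem_reverse]
    exact Walk.start_mem_support _
  exact ⟨m, hmP, bet_of_mem T hT hmP, bet_of_mem T hT hmQ, bet_of_mem T hT hmem⟩

lemma mem_of_bet [Fintype V] (hT : T.IsTree) {c v d : V} (h : Bet T c v d) :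
    v ∈ (pth T hT c d).support := by
  obtain ⟨m, hmem, b1, b2, b3⟩ := exists_median T hT c d v
  have hd0 : T.dist m v = 0 := by
    have c1 : T.dist v d = T.dist d v := SimpleGraph.dist_comm
    have c2 : T.dist m d = T.dist d m := SimpleGraph.dist_comm
    rw [bet_def] at *
    omega
  have : m = v := (hT.isConnected.dist_eq_zero_iff).mp hd0
  exact this ▸ hmem

lemma pos1 (hT : T.IsTree) {a b x y : V} (hx : x ∈ (pth T hT a b).support)
    (hy : y ∈ (pth T hT a b).support) (hle : T.dist a x ≤ T.dist a y) :
    Bet T x y b ∧ Bet T a x y := by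
  have hsplit := (pth T hT a b).take_spec hx
  have hy' : y ∈ ((pth T hT a b).takeUntil x hx).support ∨
      y ∈ ((pth T hT a b).dropUntil x hx).support := by
    rw [← Walk.mem_support_append_iff, hsplit]; exact hy
  have bxb : Bet T a x b := bet_of_mem T hT hx
  have byb : Bet T a y b := bet_of_mem T hT hy
  rcases hy' with hy' | hy'
  · have htake : ((pth T hT a b).takeUntil x hx) = pth T hT a x :=
      eq_pth T hT ((pth_isPath T hT a b).takeUntil hx)
    have bayx : Bet T a y x := bet_of_mem T hT (htake ▸ hy')
    have hd0 : T.dist y x = 0 := by rw [bet_def] at *; omega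
    have hyx : y = x := (hT.isConnected.dist_eq_zero_iff).mp hd0
    have h1 : T.dist x x = 0 := SimpleGraph.dist_self
    constructor <;> (rw [bet_def, hyx]; omega)
  · have hdrop : ((pth T hT a b).dropUntil x hx) = pth T hT x b :=
      eq_pth T hT ((pth_isPath T hT a b).dropUntil hx)
    have bxyb : Bet T x y b := bet_of_mem T hT (hdrop ▸ hy')
    refine ⟨bxyb, ?_⟩
    rw [bet_def] at *
    omega

lemma proj_bet [Fintype V] (hT : T.IsTree) {a b z m w : V}
    (hab : Bet T a m b) (haz : Bet T a m z) (hbz : Bet T b m z)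
    (hw : Bet T a w b) : Bet T z m w := by
  rcases le_total (T.dist a m) (T.dist a w) with hle | hle
  · obtain ⟨h1, _⟩ := pos1 T hT (mem_of_bet T hT hab) (mem_of_bet T hT hw) hle
    have tri : T.dist z b ≤ T.dist z w + T.dist w b :=
      hT.isConnected.dist_triangle
    have tri2 : T.dist z w ≤ T.dist z m + T.dist m w :=
      hT.isConnected.dist_triangle
    have c1 : T.dist z b = T.dist b z := SimpleGraph.dist_comm
    have c2 : T.dist b m = T.dist m b := SimpleGraph.dist_comm
    have c3 : T.dist m z = T.dist z m := SimpleGraph.dist_comm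
    rw [bet_def] at *
    omega
  · obtain ⟨_, h2⟩ := pos1 T hT (mem_of_bet T hT hw) (mem_of_bet T hT hab) hle
    have tri : T.dist z a ≤ T.dist z w + T.dist w a :=
      hT.isConnected.dist_triangle
    have tri2 : T.dist z w ≤ T.dist z m + T.dist m w :=
      hT.isConnected.dist_triangle
    have c1 : T.dist z a = T.dist a z := SimpleGraph.dist_comm
    have c2 : T.dist w a = T.dist a w := SimpleGraph.dist_comm
    have c3 : T.dist m z = T.dist z m := SimpleGraph.dist_comm
    have c4 : T.dist w m = T.dist m w := SimpleGraph.dist_comm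
    rw [bet_def] at *
    omega

lemma exists_center [Fintype V] (hT : T.IsTree) (Lx Ly : Set V)
    (hnd : ∀ c ∈ Lx, ∀ d ∈ Ly, ∀ c' ∈ Lx, ∀ d' ∈ Ly,
      ∃ w, w ∈ (pth T hT c d).support ∧ w ∈ (pth T hT c' d').support) :
    ∃ v, ∀ c ∈ Lx, ∀ d ∈ Ly, Bet T c v d := by
  classical
  have hVne : Nonempty V := hT.isConnected.nonempty
  rcases Set.eq_empty_or_nonempty Lx with hLx | ⟨a, ha⟩
  · exact ⟨hVne.some, by simp [hLx]⟩
  rcases Set.eq_empty_or_nonempty Ly with hLy | ⟨b, hb⟩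
  · exact ⟨hVne.some, by simp [hLy]⟩
  have hm : ∀ z, ∃ m, m ∈ (pth T hT a b).support ∧ Bet T a m b ∧ Bet T a m z ∧ Bet T b m z :=
    fun z => exists_median T hT a b z
  choose m hm0 hm1 hm2 hm3 using hm
  have cross1 : ∀ c u, Bet T c u b → T.dist a (m c) ≤ T.dist a (m u) := by
    intro c u hcub
    by_contra hlt
    push_neg at hlt
    obtain ⟨p1, _⟩ := pos1 T hT (mem_of_bet T hT (hm1 u)) (mem_of_bet T hT (hm1 c)) (le_of_lt hlt)
    have hproj : Bet T c (m c) (m u) := proj_bet T hT (hm1 c) (hm2 c) (hm3 c) (hm1 u)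
    have hcb : Bet T c (m c) b := bet_symm T (hm3 c)
    have hub : Bet T u (m u) b := bet_symm T (hm3 u)
    have tri : T.dist c (m u) ≤ T.dist c u + T.dist u (m u) := hT.isConnected.dist_triangle
    have cc1 : T.dist (m c) (m u) = T.dist (m u) (m c) := SimpleGraph.dist_comm
    have h0 : T.dist (m c) (m u) = 0 := by rw [bet_def] at *; omega
    have : m c = m u := (hT.isConnected.dist_eq_zero_iff).mp h0
    rw [this] at hlt
    omega
  have cross2 : ∀ d u, Bet T a u d → T.dist a (m u) ≤ T.dist a (m d) := by
    intro d u haud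
    by_contra hlt
    push_neg at hlt
    obtain ⟨_, p2⟩ := pos1 T hT (mem_of_bet T hT (hm1 d)) (mem_of_bet T hT (hm1 u)) (le_of_lt hlt)
    have hproj : Bet T d (m d) (m u) := proj_bet T hT (hm1 d) (hm2 d) (hm3 d) (hm1 u)
    have had : Bet T a (m d) d := hm2 d
    have hau : Bet T a (m u) u := hm2 u
    have tri : T.dist (m u) d ≤ T.dist (m u) u + T.dist u d := hT.isConnected.dist_triangle
    have cc1 : T.dist (m d) (m u) = T.dist (m u) (m d) := SimpleGraph.dist_comm
    have cc2 : T.dist d (m u) = T.dist (m u) d := SimpleGraph.dist_comm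
    have cc3 : T.dist d (m d) = T.dist (m d) d := SimpleGraph.dist_comm
    have cc4 : T.dist (m u) u = T.dist u (m u) := SimpleGraph.dist_comm
    have h0 : T.dist (m d) (m u) = 0 := by rw [bet_def] at *; omega
    have : m d = m u := (hT.isConnected.dist_eq_zero_iff).mp h0
    rw [this] at hlt
    omega
  obtain ⟨cs, hcs, hmax⟩ := Finset.exists_max_image
    (Finset.univ.filter (· ∈ Lx)) (fun c => T.dist a (m c)) ⟨a, by simp [ha]⟩
  simp only [Finset.mem_filter, Finset.mem_univ, true_and] at hcs hmax
  refine ⟨m cs, ?_⟩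
  intro c hc d hd
  obtain ⟨u1, hu1a, hu1b⟩ := hnd cs hcs b hb a ha d hd
  have b1 : Bet T cs u1 b := bet_of_mem T hT hu1a
  have b2 : Bet T a u1 d := bet_of_mem T hT hu1b
  have htd : T.dist a (m cs) ≤ T.dist a (m d) := le_trans (cross1 cs u1 b1) (cross2 d u1 b2)
  have htc : T.dist a (m c) ≤ T.dist a (m cs) := hmax c hc
  obtain ⟨u, hua, hub⟩ := hnd c hc d hd a ha b hb
  have bcu : Bet T c u d := bet_of_mem T hT hua
  have bau : Bet T a u b := bet_of_mem T hT hub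
  have pc : Bet T c (m c) u := proj_bet T hT (hm1 c) (hm2 c) (hm3 c) bau
  have pd : Bet T d (m d) u := proj_bet T hT (hm1 d) (hm2 d) (hm3 d) bau
  have pcv : Bet T c (m c) (m cs) := proj_bet T hT (hm1 c) (hm2 c) (hm3 c) (hm1 cs)
  have pdv : Bet T d (m d) (m cs) := proj_bet T hT (hm1 d) (hm2 d) (hm3 d) (hm1 cs)
  have q1 : Bet T a (m c) (m cs) :=
    (pos1 T hT (mem_of_bet T hT (hm1 c)) (mem_of_bet T hT (hm1 cs)) htc).2
  have q2 : Bet T a (m cs) (m d) :=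
    (pos1 T hT (mem_of_bet T hT (hm1 cs)) (mem_of_bet T hT (hm1 d)) htd).2
  have humem : u ∈ (pth T hT a b).support := mem_of_bet T hT bau
  have q3 : Bet T a (m c) u ∨ Bet T a u (m c) := by
    rcases le_total (T.dist a (m c)) (T.dist a u) with h1 | h1
    · exact Or.inl (pos1 T hT (mem_of_bet T hT (hm1 c)) humem h1).2
    · exact Or.inr (pos1 T hT humem (mem_of_bet T hT (hm1 c)) h1).2
  have q4 : Bet T a u (m d) ∨ Bet T a (m d) u := by
    rcases le_total (T.dist a u) (T.dist a (m d)) with h1 | h1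
    · exact Or.inl (pos1 T hT humem (mem_of_bet T hT (hm1 d)) h1).2
    · exact Or.inr (pos1 T hT (mem_of_bet T hT (hm1 d)) humem h1).2
  have tri : T.dist c d ≤ T.dist c (m cs) + T.dist (m cs) d := hT.isConnected.dist_triangle
  have cc1 : T.dist u d = T.dist d u := SimpleGraph.dist_comm
  have cc2 : T.dist (m d) u = T.dist u (m d) := SimpleGraph.dist_comm
  have cc3 : T.dist (m cs) (m d) = T.dist (m d) (m cs) := SimpleGraph.dist_comm
  have cc4 : T.dist (m cs) d = T.dist d (m cs) := SimpleGraph.dist_comm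
  have cc5 : T.dist u (m c) = T.dist (m c) u := SimpleGraph.dist_comm
  rcases q3 with q3 | q3 <;> rcases q4 with q4 | q4 <;> (rw [bet_def] at *; omega)

lemma reach_induce {S : Set V} : ∀ {u w : V} (p : T.Walk u w) (h : ∀ x ∈ p.support, x ∈ S),
    (T.induce S).Reachable ⟨u, h u p.start_mem_support⟩ ⟨w, h w p.end_mem_support⟩ := by
  intro u w p
  induction p with
  | nil => intro h; exact Reachable.refl _
  | @cons x y z ha p ih =>
    intro h
    have h1 : ∀ v ∈ p.support, v ∈ S := fun v hv => h v (by simp [hv])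
    have hadj : (T.induce S).Adj ⟨x, h x (Walk.start_mem_support _)⟩ ⟨y, h1 y p.start_mem_support⟩ := by
      simp only [comap_adj, Function.Embedding.coe_subtype]
      exact ha
    exact (hadj.reachable).trans (ih h1)

lemma not_mem_takeUntil {u v w : V} {p : T.Walk u v} (hp : p.IsPath) (hw : w ∈ p.support)
    (hne : w ≠ v) : v ∉ (p.takeUntil w hw).support := by
  intro hv
  have hnodup : p.support.Nodup := hp.support_nodup
  have hsplit := p.take_spec hw
  rw [← hsplit, Walk.support_append, List.nodup_append] at hnodup
  have hvd : v ∈ (p.dropUntil w hw).support := (p.dropUntil w hw).end_mem_support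
  rw [Walk.support_eq_cons (p.dropUntil w hw)] at hvd
  rw [List.mem_cons] at hvd
  rcases hvd with hvd | hvd
  · exact hne hvd.symm
  · exact hnodup.2.2 v hv v hvd rfl

end TreeHelly

/-- In a tree with vertices labelled by (possibly empty) subsets of
labels {x, y}, exactly one of the following holds: (1) there are two vertex-disjoint
paths each from an x-labelled vertex to a y-labelled vertex; (2) there is a vertex v
and two subtrees (connected induced subgraphs) T_x, T_y covering all vertices,
intersecting exactly in {v}, with T_x containing all x-labelled vertices and T_y all
y-labelled vertices. -/
theorem stmt_0 {V : Type*} [Fintype V] (T : SimpleGraph V) (hT : T.IsTree)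
    (Lx Ly : Set V) :
    Xor'
      (∃ (a b c d : V) (P : T.Walk a b) (Q : T.Walk c d),
        P.IsPath ∧ Q.IsPath ∧ a ∈ Lx ∧ b ∈ Ly ∧ c ∈ Lx ∧ d ∈ Ly ∧
        ∀ w, w ∈ P.support → w ∉ Q.support)
      (∃ (v : V) (Sx Sy : Set V),
        (T.induce Sx).Connected ∧ (T.induce Sy).Connected ∧
        Sx ∪ Sy = Set.univ ∧ Sx ∩ Sy = {v} ∧ Lx ⊆ Sx ∧ Ly ⊆ Sy) := by
  classical
  open TreeHelly SimpleGraph in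
  unfold Xor'
  by_cases h1 : (∃ (a b c d : V) (P : T.Walk a b) (Q : T.Walk c d),
      P.IsPath ∧ Q.IsPath ∧ a ∈ Lx ∧ b ∈ Ly ∧ c ∈ Lx ∧ d ∈ Ly ∧
      ∀ w, w ∈ P.support → w ∉ Q.support)
  · refine Or.inl ⟨h1, ?_⟩
    rintro ⟨v, Sx, Sy, hcx, hcy, hcover, hinter, hLx, hLy⟩
    obtain ⟨a, b, c, d, P, Q, hP, hQ, haLx, hbLy, hcLx, hdLy, hdisj⟩ := h1
    have hvmem : v ∈ Sx ∩ Sy := by rw [hinter]; rfl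
    have walkS : ∀ (S : Set V), (T.induce S).Connected → ∀ u w, u ∈ S → w ∈ S →
        ∃ p : T.Walk u w, ∀ x ∈ p.support, x ∈ S := by
      intro S hS u w hu hw
      obtain ⟨q⟩ := hS ⟨u, hu⟩ ⟨w, hw⟩
      refine ⟨q.map (SimpleGraph.Embedding.induce S).toHom, ?_⟩
      intro x hx
      have hx3 : x ∈ q.support.map (SimpleGraph.Embedding.induce (G := T) S).toHom := by
        rw [← Walk.support_map]; exact hx
      rw [List.mem_map] at hx3
      obtain ⟨s, _, rfl⟩ := hx3
      exact s.2
    have nocross : ∀ u w, u ∈ Sx → u ∉ Sy → w ∈ Sy → w ∉ Sx → ¬ T.Adj u w := by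
      intro u w hu huy hw hwx hadj
      obtain ⟨p1, hp1⟩ := walkS Sx hcx u v hu hvmem.1
      obtain ⟨p2, hp2⟩ := walkS Sy hcy v w hvmem.2 hw
      have hq1 : ∀ x ∈ (pth T hT v u).support, x ∈ Sx := by
        intro x hx
        have hx2 := pth_support_subset T hT p1.reverse hx
        rw [Walk.support_reverse, List.mem_reverse] at hx2
        exact hp1 x hx2
      have hq2 : ∀ x ∈ (pth T hT v w).support, x ∈ Sy :=
        fun x hx => hp2 x (pth_support_subset T hT p2 hx)
      have hwq1 : w ∉ (pth T hT v u).support := fun h => hwx (hq1 w h)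
      have hW5 : ((pth T hT v u).concat hadj).IsPath := by
        rw [Walk.isPath_def, Walk.support_concat]
        simp only [List.concat_eq_append, List.nodup_append]
        refine ⟨(pth_isPath T hT v u).support_nodup, List.nodup_singleton w, ?_⟩
        intro x hx y hx2 hxy
        rw [List.mem_singleton] at hx2
        rw [hxy, hx2] at hx
        exact hwq1 hx
      have humem : u ∈ (pth T hT v w).support := by
        have heq : (pth T hT v u).concat hadj = pth T hT v w := eq_pth T hT hW5
        rw [← heq, Walk.support_concat]
        simp only [List.concat_eq_append, List.mem_append]
        exact Or.inl (pth T hT v u).end_mem_support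
      exact huy (hq2 u humem)
    have cut : ∀ {x y : V} (W : T.Walk x y), x ∈ Sx → y ∈ Sy → v ∈ W.support := by
      intro x y W
      induction W with
      | nil =>
        rename_i u0
        intro hx hy
        have hxv : u0 ∈ ({v} : Set V) := by rw [← hinter]; exact Set.mem_inter hx hy
        rw [Set.mem_singleton_iff] at hxv
        simp [hxv]
      | @cons x0 y0 z0 hadj p ih =>
        intro hx hy
        by_cases hxy : x0 ∈ Sy
        · have hxv : x0 ∈ ({v} : Set V) := by rw [← hinter]; exact Set.mem_inter hx hxy
          rw [Set.mem_singleton_iff] at hxv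
          simp [hxv]
        · by_cases hnx : y0 ∈ Sx
          · rw [Walk.support_cons]
            exact List.mem_cons_of_mem _ (ih hnx hy)
          · have hnySy : y0 ∈ Sy := by
              have hun : y0 ∈ Sx ∪ Sy := by rw [hcover]; trivial
              rw [Set.mem_union] at hun
              rcases hun with h | h
              · exact absurd h hnx
              · exact h
            exact absurd hadj (nocross x0 y0 hx hxy hnySy hnx)
    exact hdisj v (cut P (hLx haLx) (hLy hbLy)) (cut Q (hLx hcLx) (hLy hdLy))
  · refine Or.inr ⟨?_, h1⟩
    have hnd : ∀ c ∈ Lx, ∀ d ∈ Ly, ∀ c' ∈ Lx, ∀ d' ∈ Ly,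
        ∃ w, w ∈ (pth T hT c d).support ∧ w ∈ (pth T hT c' d').support := by
      intro c hc d hd c' hc' d' hd'
      by_contra hno
      push_neg at hno
      exact h1 ⟨c, d, c', d', pth T hT c d, pth T hT c' d', pth_isPath T hT c d,
        pth_isPath T hT c' d', hc, hd, hc', hd', hno⟩
    obtain ⟨v, hv⟩ := exists_center T hT Lx Ly hnd
    have hvwalk : ∀ c ∈ Lx, ∀ d ∈ Ly, ∀ (p : T.Walk c d), v ∈ p.support :=
      fun c hc d hd p => pth_support_subset T hT p (mem_of_bet T hT (hv c hc d hd))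
    set Sy : Set V := {u | u = v ∨ ∃ d ∈ Ly, ∃ p : T.Walk u d, v ∉ p.support} with hSydef
    set Sx : Set V := {u | u = v ∨ u ∉ Sy} with hSxdef
    have hvSy : v ∈ Sy := Or.inl rfl
    have hvSx : v ∈ Sx := Or.inl rfl
    have hnilvv : pth T hT v v = Walk.nil := (eq_pth T hT Walk.IsPath.nil).symm
    have hSyPath : ∀ u ∈ Sy, ∀ w ∈ (pth T hT u v).support, w ∈ Sy := by
      intro u hu w hw
      by_cases hwv : w = v
      · exact Or.inl hwv
      rcases hu with rfl | ⟨d, hd, p, hp⟩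
      · rw [hnilvv] at hw
        simp only [Walk.support_nil, List.mem_singleton] at hw
        exact absurd hw hwv
      · refine Or.inr ⟨d, hd, (((pth T hT u v).takeUntil w hw).reverse.append p), ?_⟩
        intro hvmem
        rcases (Walk.mem_support_append_iff _ _).mp hvmem with h | h
        · rw [Walk.support_reverse, List.mem_reverse] at h
          exact not_mem_takeUntil T (pth_isPath T hT u v) hw hwv h
        · exact hp h
    have hSxPath : ∀ u ∈ Sx, ∀ w ∈ (pth T hT u v).support, w ∈ Sx := by
      intro u hu w hw
      by_cases hwv : w = v
      · exact Or.inl hwv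
      rcases hu with rfl | hunSy
      · rw [hnilvv] at hw
        simp only [Walk.support_nil, List.mem_singleton] at hw
        exact absurd hw hwv
      · refine Or.inr ?_
        intro hwSy
        rcases hwSy with h | ⟨d, hd, p, hp⟩
        · exact hwv h
        · apply hunSy
          refine Or.inr ⟨d, hd, ((pth T hT u v).takeUntil w hw).append p, ?_⟩
          intro hvmem
          rcases (Walk.mem_support_append_iff _ _).mp hvmem with h | h
          · exact not_mem_takeUntil T (pth_isPath T hT u v) hw hwv h
          · exact hp h
    have conn : ∀ (S : Set V), v ∈ S → (∀ u ∈ S, ∀ w ∈ (pth T hT u v).support, w ∈ S) →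
        (T.induce S).Connected := by
      intro S hvS hpath
      rw [connected_iff]
      refine ⟨?_, ⟨⟨v, hvS⟩⟩⟩
      rintro ⟨x, hx⟩ ⟨y, hy⟩
      have hx' := reach_induce T (pth T hT x v) (hpath x hx)
      have hy' := reach_induce T (pth T hT y v) (hpath y hy)
      exact hx'.trans hy'.symm
    refine ⟨v, Sx, Sy, conn Sx hvSx hSxPath, conn Sy hvSy hSyPath, ?_, ?_, ?_, ?_⟩
    · apply Set.eq_univ_iff_forall.mpr
      intro u
      by_cases h : u ∈ Sy
      · exact Or.inr h
      · exact Or.inl (Or.inr h)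
    · apply Set.eq_of_subset_of_subset
      · rintro u ⟨hux, huy⟩
        rcases hux with h | h
        · exact h
        · exact absurd huy h
      · rintro u hu
        rw [Set.mem_singleton_iff] at hu
        subst hu
        exact ⟨hvSx, hvSy⟩
    · intro c hc
      by_cases hcv : c = v
      · exact Or.inl hcv
      refine Or.inr ?_
      intro hcSy
      rcases hcSy with h | ⟨d, hd, p, hp⟩
      · exact hcv h
      · exact hp (hvwalk c hc d hd p)
    · intro d hd
      by_cases hdv : d = v
      · exact Or.inl hdv
      refine Or.inr ⟨d, hd, Walk.nil, ?_⟩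
      simp only [Walk.support_nil, List.mem_singleton]
      exact fun h => hdv h.symm
end

section
/- In a 2-connected sparse graph that is not a cycle, every cycle contains at least two vertices of degree at least 3, and these can be chosen non-adjacent. -/
open SimpleGraph

section Aux

variable {V : Type*} {G : SimpleGraph V}

lemma aux_loop_eq_nil {v : V} {r : G.Walk v v} (h : r.IsPath) : r = Walk.nil := by
  cases r with
  | nil => rfl
  | cons had r' =>
    exfalso
    have hnd := h.support_nodup
    rw [Walk.support_cons] at hnd
    exact (List.nodup_cons.mp hnd).1 r'.end_mem_support

lemma path_endpoint_nbr : ∀ {w v : V} (q : G.Walk w v), q.IsPath → w ≠ v →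
    ∃ x, q.toSubgraph.neighborSet v = {x} := by
  intro w v q
  induction q with
  | nil => exact fun _ h => absurd rfl h
  | @cons w y v h' r ih =>
    intro hp _
    rw [Walk.cons_isPath_iff] at hp
    by_cases hyv : y = v
    · subst hyv
      have hr : r = Walk.nil := aux_loop_eq_nil hp.1
      subst hr
      refine ⟨w, ?_⟩
      rw [Walk.toSubgraph, Walk.toSubgraph, Subgraph.neighborSet_sup,
        neighborSet_singletonSubgraph, neighborSet_snd_subgraphOfAdj, Set.union_empty]
    · obtain ⟨x, hx⟩ := ih hp.1 hyv
      refine ⟨x, ?_⟩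
      have hwv : w ≠ v := fun h => hp.2 (h ▸ r.end_mem_support)
      rw [Walk.toSubgraph, Subgraph.neighborSet_sup, hx,
        neighborSet_subgraphOfAdj_of_ne_of_ne h' (Ne.symm hwv) (Ne.symm hyv),
        Set.empty_union]

lemma cycle_start_nbr {v : V} {p : G.Walk v v} (hp : p.IsCycle) :
    ∃ x y, x ≠ y ∧ p.toSubgraph.neighborSet v = {x, y} := by
  cases p with
  | nil => exact absurd hp Walk.IsCycle.not_of_nil
  | @cons v w _ h q =>
    rw [Walk.cons_isCycle_iff] at hp
    obtain ⟨x, hx⟩ := path_endpoint_nbr q hp.1 h.ne'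
    have hadjx : q.toSubgraph.Adj v x := by
      have : x ∈ q.toSubgraph.neighborSet v := by rw [hx]; rfl
      exact this
    have hex : s(v, x) ∈ q.edges :=
      (q.mem_edges_toSubgraph).mp ((Subgraph.mem_edgeSet).mpr hadjx)
    have hxw : w ≠ x := fun hh => hp.2 (hh ▸ hex)
    refine ⟨w, x, hxw, ?_⟩
    rw [Walk.toSubgraph, Subgraph.neighborSet_sup, neighborSet_fst_subgraphOfAdj, hx,
      Set.singleton_union]

lemma cycle_nbr [DecidableEq V] {a v : V} {C : G.Walk a a} (hC : C.IsCycle)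
    (hv : v ∈ C.support) :
    ∃ x y, x ≠ y ∧ C.toSubgraph.neighborSet v = {x, y} := by
  have h := cycle_start_nbr (hC.rotate hv)
  rwa [Walk.toSubgraph_rotate] at h

lemma deg2_mem_edges [Fintype V] [DecidableEq V] [DecidableRel G.Adj]
    {a v : V} {C : G.Walk a a} (hC : C.IsCycle) (hv : v ∈ C.support)
    (hd : G.degree v ≤ 2) {w : V} (hadj : G.Adj v w) : s(v, w) ∈ C.edges := by
  obtain ⟨x, y, hxy, hN⟩ := cycle_nbr hC hv
  have hadjx : C.toSubgraph.Adj v x := by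
    have : x ∈ C.toSubgraph.neighborSet v := by rw [hN]; left; rfl
    exact this
  have hadjy : C.toSubgraph.Adj v y := by
    have : y ∈ C.toSubgraph.neighborSet v := by rw [hN]; right; rfl
    exact this
  have hsub : ({x, y} : Finset V) ⊆ G.neighborFinset v := by
    intro z hz
    rw [SimpleGraph.mem_neighborFinset]
    rcases Finset.mem_insert.mp hz with h | h
    · exact h ▸ C.toSubgraph.adj_sub hadjx
    · exact (Finset.mem_singleton.mp h) ▸ C.toSubgraph.adj_sub hadjy
  have heq : G.neighborFinset v = {x, y} := by
    symm
    apply Finset.eq_of_subset_of_card_le hsub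
    rw [Finset.card_pair hxy]
    exact hd
  have hw : w ∈ ({x, y} : Finset V) := by
    rw [← heq, SimpleGraph.mem_neighborFinset]; exact hadj
  have hadjw : C.toSubgraph.Adj v w := by
    rcases Finset.mem_insert.mp hw with h | h
    · exact h ▸ hadjx
    · exact (Finset.mem_singleton.mp h) ▸ hadjy
  exact (C.mem_edges_toSubgraph).mp ((Subgraph.mem_edgeSet).mpr hadjw)

lemma walk_closed {S : Set V} {P : V → Prop}
    (hcl : ∀ x y, x ∈ S → P x → P y → G.Adj x y → y ∈ S) :
    ∀ {u w : V} (p : G.Walk u w), u ∈ S → (∀ z ∈ p.support, P z) → w ∈ S := by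
  intro u w p
  induction p with
  | nil => exact fun h _ => h
  | @cons u y w h' q ih =>
    intro hu hP
    apply ih
    · refine hcl u y hu (hP u (Walk.start_mem_support _)) ?_ h'
      exact hP y (by rw [Walk.support_cons]; exact List.mem_cons_of_mem _ q.start_mem_support)
    · intro z hz
      exact hP z (by rw [Walk.support_cons]; exact List.mem_cons_of_mem _ hz)

lemma exists_walk_avoiding {t u w : V} (hconn : (G.induce {t}ᶜ).Connected)
    (hu : u ≠ t) (hw : w ≠ t) : ∃ p : G.Walk u w, ∀ z ∈ p.support, z ≠ t := by
  have hu' : u ∈ ({t}ᶜ : Set V) := by simp [hu]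
  have hw' : w ∈ ({t}ᶜ : Set V) := by simp [hw]
  obtain ⟨q⟩ := hconn.preconnected ⟨u, hu'⟩ ⟨w, hw'⟩
  refine ⟨q.map (SimpleGraph.Embedding.induce ({t}ᶜ : Set V)).toHom, ?_⟩
  intro z hz
  replace hz : z ∈ (q.map (SimpleGraph.Embedding.induce ({t}ᶜ : Set V)).toHom).support := hz
  rw [Walk.support_map, List.mem_map] at hz
  obtain ⟨⟨z', hz'⟩, _, rfl⟩ := hz
  simpa using hz'

end Aux

/-- In a 2-connected sparse graph that is not a cycle, every cycle
contains two non-adjacent vertices of degree at least 3. -/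
theorem stmt_3 {V : Type*} [Fintype V] [DecidableEq V] (G : SimpleGraph V)
    [DecidableRel G.Adj]
    (h2conn : 3 ≤ Fintype.card V ∧ ∀ v : V, (G.induce {v}ᶜ).Connected)
    (hsparse : ∀ u v : V, G.Adj u v → G.degree u ≤ 2 ∨ G.degree v ≤ 2)
    (hnotcycle : ¬ ∃ (a : V) (C : G.Walk a a), C.IsCycle ∧
      (∀ v : V, v ∈ C.support) ∧ ∀ e ∈ G.edgeSet, e ∈ C.edges) :
    ∀ (a : V) (C : G.Walk a a), C.IsCycle →
      ∃ u v : V, u ∈ C.support ∧ v ∈ C.support ∧ u ≠ v ∧ ¬ G.Adj u v ∧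
        3 ≤ G.degree u ∧ 3 ≤ G.degree v := by
  intro a C hC
  obtain ⟨hcard, hconn⟩ := h2conn
  by_cases h3 : ∃ u ∈ C.support, 3 ≤ G.degree u
  · obtain ⟨u, huC, hdu⟩ := h3
    by_cases h3' : ∃ u' ∈ C.support, u' ≠ u ∧ 3 ≤ G.degree u'
    · obtain ⟨u', hu'C, hne, hdu'⟩ := h3'
      refine ⟨u, u', huC, hu'C, hne.symm, ?_, hdu, hdu'⟩
      intro hadj
      rcases hsparse u u' hadj with h | h <;> omega
    · exfalso
      push_neg at h3'
      have hdeg2 : ∀ z ∈ C.support, z ≠ u → G.degree z ≤ 2 := by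
        intro z hz hzu
        have := h3' z hz hzu
        omega
      obtain ⟨x, y, hxy, hN⟩ := cycle_nbr hC huC
      have hsub2 : ∀ z, s(u, z) ∈ C.edges → z = x ∨ z = y := by
        intro z hz
        have hadj : C.toSubgraph.Adj u z :=
          (Subgraph.mem_edgeSet).mp ((C.mem_edges_toSubgraph).mpr hz)
        have : z ∈ C.toSubgraph.neighborSet u := hadj
        rw [hN] at this
        exact this
      have hex : ∃ w, G.Adj u w ∧ s(u, w) ∉ C.edges := by
        by_contra hno
        push_neg at hno
        have hsub : G.neighborFinset u ⊆ {x, y} := by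
          intro z hz
          rw [SimpleGraph.mem_neighborFinset] at hz
          rcases hsub2 z (hno z hz) with h | h <;> simp [h]
        have h1 := Finset.card_le_card hsub
        rw [SimpleGraph.card_neighborFinset_eq_degree] at h1
        rw [Finset.card_pair hxy] at h1
        omega
      obtain ⟨w, hadjw, hwe⟩ := hex
      have hwu : w ≠ u := fun h => G.irrefl (h ▸ hadjw)
      have hwC : w ∉ C.support := by
        intro hwC
        exact hwe (Sym2.eq_swap ▸ deg2_mem_edges hC hwC (hdeg2 w hwC hwu) hadjw.symm)
      have hadjux : C.toSubgraph.Adj u x := by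
        have : x ∈ C.toSubgraph.neighborSet u := by rw [hN]; left; rfl
        exact this
      have hexu : s(u, x) ∈ C.edges :=
        (C.mem_edges_toSubgraph).mp ((Subgraph.mem_edgeSet).mpr hadjux)
      have hxC : x ∈ C.support := C.snd_mem_support_of_mem_edges hexu
      have hxu : x ≠ u := fun h => G.irrefl (h ▸ C.toSubgraph.adj_sub hadjux)
      obtain ⟨p, hp⟩ := exists_walk_avoiding (hconn u) hwu hxu
      have hout : x ∉ C.support := by
        refine walk_closed (S := {z | z ∉ C.support}) (P := fun z => z ≠ u)
          ?_ p hwC hp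
        intro s t hs _ hPt hadj htC
        have hdt := hdeg2 t htC hPt
        exact hs (C.snd_mem_support_of_mem_edges (deg2_mem_edges hC htC hdt hadj.symm))
      exact hout hxC
  · exfalso
    push_neg at h3
    have hdeg2 : ∀ z ∈ C.support, G.degree z ≤ 2 := by
      intro z hz
      have := h3 z hz
      omega
    apply hnotcycle
    have hspan : ∀ z : V, z ∈ C.support := by
      intro z
      have hex : ∃ t : V, t ≠ a ∧ t ≠ z := by
        by_contra hno
        push_neg at hno
        have hsub : (Finset.univ : Finset V) ⊆ {a, z} := by
          intro t _
          by_cases h : t = a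
          · simp [h]
          · simp [hno t h]
        have h1 := Finset.card_le_card hsub
        rw [Finset.card_univ] at h1
        have h2 := Finset.card_insert_le a ({z} : Finset V)
        rw [Finset.card_singleton] at h2
        omega
      obtain ⟨t, hta, htz⟩ := hex
      obtain ⟨p, hp⟩ := exists_walk_avoiding (hconn t) (Ne.symm hta) (Ne.symm htz)
      refine walk_closed (S := {z | z ∈ C.support}) (P := fun _ => True)
        ?_ p (C.start_mem_support) (fun _ _ => trivial)
      intro s t hs _ _ hadj
      exact C.snd_mem_support_of_mem_edges (deg2_mem_edges hC hs (hdeg2 s hs) hadj)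
    refine ⟨a, C, hC, hspan, ?_⟩
    intro e he
    induction e with
    | h s t =>
      rw [SimpleGraph.mem_edgeSet] at he
      exact deg2_mem_edges hC (hspan s) (hdeg2 s (hspan s)) he
end

section
/- In a 2-connected graph G, no cycle of G contains exactly one vertex of degree at least 3 (in G). -/
open SimpleGraph

section aux
variable {V : Type*} {G : SimpleGraph V}

private lemma aux_getVert_one_ne_end {x y : V} {p : G.Walk x y} (hp : p.IsPath)
    (hl : 2 ≤ p.length) : p.getVert 1 ≠ y := by
  cases p with
  | nil => simp at hl
  | cons h r =>
    rw [Walk.getVert_cons_succ, Walk.getVert_zero]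
    rintro rfl
    have hr : r.IsPath := hp.of_cons
    rw [Walk.isPath_iff_eq_nil] at hr
    subst hr
    simp at hl

private lemma aux_two_nbrs_start {w : V} (C : G.Walk w w) (hC : C.IsCycle) :
    ∃ b c, b ≠ c ∧ C.toSubgraph.Adj w b ∧ C.toSubgraph.Adj w c := by
  cases C with
  | nil => simpa using hC.three_le_length
  | @cons _ m _ h q =>
    obtain ⟨hq, -⟩ := (Walk.cons_isCycle_iff q h).mp hC
    have h3 := hC.three_le_length
    rw [Walk.length_cons] at h3
    have hrl : 0 < q.reverse.length := by rw [Walk.length_reverse]; omega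
    have hc0 : q.reverse.toSubgraph.Adj (q.reverse.getVert 0) (q.reverse.getVert 1) :=
      Walk.toSubgraph_adj_getVert _ hrl
    rw [Walk.getVert_zero, Walk.toSubgraph_reverse] at hc0
    refine ⟨m, q.reverse.getVert 1, ?_, ?_, ?_⟩
    · exact (aux_getVert_one_ne_end hq.reverse (by rw [Walk.length_reverse]; omega)).symm
    · exact Subgraph.sup_adj.mpr (Or.inl (by simp))
    · exact Subgraph.sup_adj.mpr (Or.inr hc0)

private lemma aux_two_nbrs {a w : V} [DecidableEq V] (C : G.Walk a a) (hC : C.IsCycle)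
    (hw : w ∈ C.support) :
    ∃ b c, b ≠ c ∧ C.toSubgraph.Adj w b ∧ C.toSubgraph.Adj w c := by
  obtain ⟨b, c, h1, h2, h3⟩ := aux_two_nbrs_start (C.rotate w hw) (hC.rotate hw)
  rw [Walk.toSubgraph_rotate] at h2 h3
  exact ⟨b, c, h1, h2, h3⟩

private lemma aux_path_nbrs_end {x y : V} {p : G.Walk x y} (hp : p.IsPath) :
    (p.toSubgraph.neighborSet y).Subsingleton := by
  induction p with
  | nil =>
    intro a ha
    simp [Walk.toSubgraph, neighborSet_singletonSubgraph] at ha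
  | @cons u m yy h r ih =>
    have hr : r.IsPath := hp.of_cons
    have hu : u ∉ r.support := ((Walk.cons_isPath_iff h r).mp hp).2
    have huy : u ≠ yy := fun he => hu (he ▸ r.end_mem_support)
    have key : ∀ z, (G.subgraphOfAdj h).Adj yy z → z = u ∧ m = yy := by
      intro z hz
      rw [subgraphOfAdj_adj, Sym2.eq_iff] at hz
      rcases hz with ⟨h1, h2⟩ | ⟨h1, h2⟩
      · exact absurd h1 huy
      · exact ⟨h1.symm, h2⟩
    intro a ha b hb
    rw [Walk.toSubgraph, Subgraph.mem_neighborSet, Subgraph.sup_adj] at ha hb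
    rcases ha with ha | ha
    · obtain ⟨rfl, rfl⟩ := key _ ha
      have hnil := Walk.isPath_iff_eq_nil.mp hr
      subst hnil
      rcases hb with hb | hb
      · exact ((key _ hb).1).symm
      · simp only [Walk.toSubgraph, singletonSubgraph_adj, Pi.bot_apply,
          Prop.bot_eq_false] at hb
    · rcases hb with hb | hb
      · obtain ⟨rfl, rfl⟩ := key _ hb
        have hnil := Walk.isPath_iff_eq_nil.mp hr
        subst hnil
        simp only [Walk.toSubgraph, singletonSubgraph_adj, Pi.bot_apply,
          Prop.bot_eq_false] at ha
      · exact ih hr ha hb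

private lemma aux_nbrs_le_two {w : V} (D : G.Walk w w) (hD : D.IsCycle) :
    (D.toSubgraph.neighborSet w).ncard ≤ 2 := by
  cases D with
  | nil => simpa using hD.three_le_length
  | @cons _ m _ h q =>
    obtain ⟨hq, -⟩ := (Walk.cons_isCycle_iff q h).mp hD
    have hsub : (Walk.cons h q).toSubgraph.neighborSet w ⊆
        ({m} ∪ q.toSubgraph.neighborSet w : Set V) := by
      intro z hz
      rw [Walk.toSubgraph, Subgraph.mem_neighborSet, Subgraph.sup_adj] at hz
      rcases hz with hz | hz
      · rw [subgraphOfAdj_adj, Sym2.eq_iff] at hz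
        rcases hz with ⟨h1, h2⟩ | ⟨h1, h2⟩
        · exact Or.inl h2.symm
        · exact absurd h2.symm (G.ne_of_adj h)
      · exact Or.inr hz
    calc ((Walk.cons h q).toSubgraph.neighborSet w).ncard
        ≤ ({m} ∪ q.toSubgraph.neighborSet w : Set V).ncard :=
          Set.ncard_le_ncard hsub ((Set.finite_singleton m).union (Walk.finite_neighborSet_toSubgraph q))
      _ ≤ ({m} : Set V).ncard + (q.toSubgraph.neighborSet w).ncard :=
          Set.ncard_union_le _ _
      _ ≤ 1 + 1 := by
          gcongr
          · simp
          · exact (Set.ncard_le_one (Walk.finite_neighborSet_toSubgraph q)).mpr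
              (fun a ha b hb => aux_path_nbrs_end hq ha hb)

private lemma aux_first_entry {S : Set V} : ∀ {u c : V} (p : G.Walk u c), u ∉ S → c ∈ S →
    ∃ x w, G.Adj x w ∧ x ∉ S ∧ w ∈ S ∧ w ∈ p.support
  | _, _, Walk.nil, hu, hc => absurd hc hu
  | _, _, Walk.cons (v := b) h q, hu, hc => by
    by_cases hb : b ∈ S
    · exact ⟨_, b, h, hu, hb, by simp⟩
    · obtain ⟨x, w, h1, h2, h3, h4⟩ := aux_first_entry q hb hc
      exact ⟨x, w, h1, h2, h3, by simp [h4]⟩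

end aux

/-- In a 2-connected graph G (at least 3 vertices, removing any vertex
leaves it connected), no cycle of G contains exactly one vertex of degree at least 3
in G. -/
theorem stmt_5 {V : Type*} [Fintype V] [DecidableEq V] (G : SimpleGraph V)
    [DecidableRel G.Adj]
    (hcard : 3 ≤ Fintype.card V)
    (h2conn : ∀ v : V, (G.induce {v}ᶜ).Connected) :
    ∀ (a : V) (C : G.Walk a a), C.IsCycle →
      ¬ ∃! v : V, v ∈ C.support ∧ 3 ≤ G.degree v := by
  intro a C hC ⟨v, ⟨hvs, hvd⟩, huniq⟩
  have hdeg : ∀ w : V, G.degree w = (G.neighborSet w).ncard := by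
    intro w
    rw [← G.card_neighborFinset_eq_degree, G.neighborFinset_def, Set.ncard_eq_toFinset_card']
  have L2 : ∀ w x : V, w ∈ C.support → G.Adj w x → ¬ C.toSubgraph.Adj w x →
      3 ≤ G.degree w := by
    intro w x hw hadj hnadj
    obtain ⟨b, c, hbc, hb, hc⟩ := aux_two_nbrs C hC hw
    have hxb : x ≠ b := fun he => hnadj (he ▸ hb)
    have hxc : x ≠ c := fun he => hnadj (he ▸ hc)
    have hsub : ({x, b, c} : Set V) ⊆ G.neighborSet w := by
      rintro z (rfl | rfl | rfl)
      · exact hadj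
      · exact hb.adj_sub
      · exact hc.adj_sub
    have h3 : ({x, b, c} : Set V).ncard = 3 := by
      rw [Set.ncard_insert_of_notMem (by simp [hxb, hxc]) (Set.toFinite _),
        Set.ncard_pair hbc]
    calc 3 = ({x, b, c} : Set V).ncard := h3.symm
      _ ≤ (G.neighborSet w).ncard := Set.ncard_le_ncard hsub (Set.toFinite _)
      _ = G.degree w := (hdeg w).symm
  by_cases hall : ∀ u : V, u ∈ C.support
  · -- the cycle spans all vertices
    have hub : (C.toSubgraph.neighborSet v).ncard ≤ 2 := by
      rw [← Walk.toSubgraph_rotate C hvs]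
      exact aux_nbrs_le_two _ (hC.rotate hvs)
    have hex : ∃ x, G.Adj v x ∧ ¬ C.toSubgraph.Adj v x := by
      by_contra hcon
      push_neg at hcon
      have hss : G.neighborSet v ⊆ C.toSubgraph.neighborSet v := fun z hz => hcon z hz
      have := Set.ncard_le_ncard hss (Set.toFinite _)
      rw [← hdeg v] at this
      omega
    obtain ⟨x, hvx, hnvx⟩ := hex
    have hxv : x ≠ v := fun he => G.loopless.irrefl v (he ▸ hvx)
    exact hxv (huniq x ⟨hall x, L2 x v (hall x) hvx.symm (fun hh => hnvx hh.symm)⟩)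
  · -- some vertex u is off the cycle
    push_neg at hall
    obtain ⟨u, hu⟩ := hall
    obtain ⟨b, c, -, hb, -⟩ := aux_two_nbrs C hC hvs
    have hbv : b ≠ v := (G.ne_of_adj hb.adj_sub).symm
    have hbs : b ∈ C.support := (Walk.mem_verts_toSubgraph C).mp hb.snd_mem
    have huv : u ≠ v := fun he => hu (he ▸ hvs)
    have hconn := (h2conn v).preconnected ⟨u, Set.mem_compl_singleton_iff.mpr huv⟩ ⟨b, Set.mem_compl_singleton_iff.mpr hbv⟩
    obtain ⟨W⟩ := hconn
    have hp : ∃ p : G.Walk u b, ∀ y ∈ p.support, y ≠ v := by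
      refine ⟨W.map (SimpleGraph.Embedding.induce ({v}ᶜ : Set V)).toHom, ?_⟩
      intro y hy
      replace hy : y ∈ (W.map (SimpleGraph.Embedding.induce ({v}ᶜ : Set V)).toHom).support := hy
      rw [Walk.support_map, List.mem_map] at hy
      obtain ⟨⟨z, hz⟩, -, rfl⟩ := hy
      exact hz
    obtain ⟨p, hpv⟩ := hp
    obtain ⟨x, w, hxw, hxS, hwS, hwp⟩ :=
      aux_first_entry (S := {y | y ∈ C.support}) p hu hbs
    have hwv : w ≠ v := hpv w hwp
    have hnadj : ¬ C.toSubgraph.Adj w x := fun hh =>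
      hxS ((Walk.mem_verts_toSubgraph C).mp hh.snd_mem)
    exact hwv (huniq w ⟨hwS, L2 w x hwS hxw.symm hnadj⟩)
end

section
/- Let G be a graph in which every induced subgraph either has a vertex of degree at most 2 or has a clique cutset of size at most 2 or is bipartite. Then G is 3-colorable. -/
/-- Given two functions injective on a set of size at most 2 into `Fin 3`, there is a
permutation of `Fin 3` matching them on that set. -/
lemma exists_perm_match {V : Type*} (C : Set V) (hfin : C.Finite) (hC : C.ncard ≤ 2)
    (f1 f2 : V → Fin 3) (h1 : Set.InjOn f1 C) (h2 : Set.InjOn f2 C) :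
    ∃ σ : Equiv.Perm (Fin 3), ∀ c ∈ C, σ (f2 c) = f1 c := by
  rcases Set.eq_empty_or_nonempty C with rfl | ⟨x, hx⟩
  · exact ⟨1, by simp⟩
  by_cases hsing : ∀ y ∈ C, y = x
  · refine ⟨Equiv.swap (f2 x) (f1 x), ?_⟩
    intro c hc
    rw [hsing c hc]
    simp [Equiv.swap_apply_left]
  · push_neg at hsing
    obtain ⟨y, hy, hyx⟩ := hsing
    have hCxy : C = {x, y} := by
      have hsub : ({x, y} : Set V) ⊆ C := by
        intro z hz; rcases hz with rfl | rfl <;> assumption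
      have h2le : ({x, y} : Set V).ncard = 2 := by
        rw [Set.ncard_pair (Ne.symm hyx)]
      refine (Set.eq_of_subset_of_ncard_le hsub ?_ hfin).symm
      omega
    set σ1 := Equiv.swap (f2 x) (f1 x) with hσ1
    have hx1 : σ1 (f2 x) = f1 x := Equiv.swap_apply_left _ _
    have hne2 : f2 y ≠ f2 x := fun hcontra => hyx (h2 hy hx hcontra)
    have hne1 : f1 y ≠ f1 x := fun hcontra => hyx (h1 hy hx hcontra)
    set p := σ1 (f2 y) with hp
    have hpne : p ≠ f1 x := by
      rw [← hx1]; exact fun hcontra => hne2 (σ1.injective hcontra)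
    set σ2 := Equiv.swap p (f1 y) with hσ2
    refine ⟨σ1.trans σ2, ?_⟩
    intro c hc
    have hc' : c = x ∨ c = y := by
      have : c ∈ ({x, y} : Set V) := hCxy ▸ hc
      simpa using this
    rcases hc' with rfl | rfl
    · simp only [Equiv.trans_apply, hx1, hσ2]
      rw [Equiv.swap_apply_of_ne_of_ne (Ne.symm hpne) (Ne.symm hne1)]
    · simp only [Equiv.trans_apply, ← hp, hσ2]
      exact Equiv.swap_apply_left _ _

/-- Let G be a graph in which every (nonempty) induced subgraph either
has a vertex of degree at most 2, or has a clique cutset of size at most 2, or is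
bipartite. Then G is 3-colorable. -/
theorem stmt_9 {V : Type*} [Fintype V] (G : SimpleGraph V)
    (h : ∀ S : Set V, S.Nonempty →
      (∃ v ∈ S, {u ∈ S | G.Adj v u}.ncard ≤ 2) ∨
      (∃ C : Set V, C ⊆ S ∧ C.ncard ≤ 2 ∧ (∀ u ∈ C, ∀ v ∈ C, u ≠ v → G.Adj u v) ∧
        ∃ a ∈ S, ∃ b ∈ S, a ∉ C ∧ b ∉ C ∧
          ∀ W : G.Walk a b, (∀ w ∈ W.support, w ∈ S) → ∃ c ∈ W.support, c ∈ C) ∨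
      (G.induce S).Colorable 2) :
    G.Colorable 3 := by
  classical
  suffices key : ∀ n (S : Set V), S.ncard ≤ n →
      ∃ f : V → Fin 3, ∀ u ∈ S, ∀ v ∈ S, G.Adj u v → f u ≠ f v by
    obtain ⟨f, hf⟩ := key (Set.univ : Set V).ncard Set.univ le_rfl
    exact ⟨⟨f, fun hadj => hf _ trivial _ trivial hadj⟩⟩
  intro n
  induction n with
  | zero =>
    intro S hS
    have : S = ∅ := by
      have := S.toFinite
      rw [← Set.ncard_eq_zero this]; omega
    subst this
    exact ⟨fun _ => 0, by simp⟩
  | succ n ih =>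
    intro S hS
    rcases Set.eq_empty_or_nonempty S with rfl | hne
    · exact ⟨fun _ => 0, by simp⟩
    rcases h S hne with ⟨v, hv, hdeg⟩ | ⟨C, hCS, hC2, hclique, a, ha, b, hb, haC, hbC, hcut⟩ | hbip
    · -- low degree vertex
      have hcard : (S \ {v}).ncard ≤ n := by
        have := Set.ncard_diff_singleton_add_one hv S.toFinite
        omega
      obtain ⟨f, hf⟩ := ih (S \ {v}) hcard
      set N : Set V := {u ∈ S | G.Adj v u} with hN
      have hNfin : N.Finite := Set.toFinite N
      have himg : (f '' N).ncard ≤ 2 :=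
        le_trans (Set.ncard_image_le hNfin) hdeg
      have hexc : ∃ c : Fin 3, c ∉ f '' N := by
        by_contra hcon
        push_neg at hcon
        have : (Set.univ : Set (Fin 3)) ⊆ f '' N := fun c _ => hcon c
        have h3 : (Set.univ : Set (Fin 3)).ncard = 3 := by
          rw [Set.ncard_univ]; simp
        have := Set.ncard_le_ncard this (hNfin.image f)
        omega
      obtain ⟨c, hc⟩ := hexc
      refine ⟨Function.update f v c, ?_⟩
      intro u hu w hw hadj
      by_cases huv : u = v
      · subst huv
        have hwv : w ≠ u := fun hcontra => (hcontra ▸ hadj).ne' rfl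
        rw [Function.update_self, Function.update_of_ne hwv]
        intro hcontra
        exact hc ⟨w, ⟨hw, hadj⟩, hcontra.symm⟩
      · by_cases hwv : w = v
        · subst hwv
          rw [Function.update_self, Function.update_of_ne huv]
          intro hcontra
          exact hc ⟨u, ⟨hu, hadj.symm⟩, hcontra⟩
        · rw [Function.update_of_ne huv, Function.update_of_ne hwv]
          exact hf u ⟨hu, huv⟩ w ⟨hw, hwv⟩ hadj
    · -- clique cutset
      set A : Set V := {x ∈ S \ C | ∃ W : G.Walk a x, ∀ w ∈ W.support, w ∈ S \ C}
        with hA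
      have haA : a ∈ A := ⟨⟨ha, haC⟩, SimpleGraph.Walk.nil, by simp [ha, haC]⟩
      have hbA : b ∉ A := by
        rintro ⟨-, W, hW⟩
        obtain ⟨c, hcW, hcC⟩ := hcut W (fun w hw => (hW w hw).1)
        exact (hW c hcW).2 hcC
      -- closure of A under adjacency within S \ C
      have hclose : ∀ x ∈ A, ∀ y ∈ S, y ∉ C → G.Adj x y → y ∈ A := by
        rintro x ⟨hxS, W, hW⟩ y hyS hyC hadj
        refine ⟨⟨hyS, hyC⟩, W.concat hadj, ?_⟩
        intro w hw
        simp only [SimpleGraph.Walk.support_concat, List.concat_eq_append,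
          List.mem_append, List.mem_singleton] at hw
        rcases hw with hw | hw
        · exact hW w hw
        · subst hw; exact ⟨hyS, hyC⟩
      have hAS : A ⊆ S := fun x hx => hx.1.1
      have hCfin : C.Finite := Set.toFinite C
      set S1 : Set V := A ∪ C with hS1
      set S2 : Set V := S \ A with hS2
      have hS1sub : S1 ⊆ S := Set.union_subset hAS hCS
      have hS2sub : S2 ⊆ S := Set.diff_subset
      have hS1card : S1.ncard ≤ n := by
        have hss : S1 ⊂ S := ⟨hS1sub, fun hcon => by
          rcases hcon hb with hbA' | hbC'
          exacts [hbA hbA', hbC hbC']⟩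
        have := Set.ncard_lt_ncard hss S.toFinite
        omega
      have hS2card : S2.ncard ≤ n := by
        have hss : S2 ⊂ S := ⟨hS2sub, fun hcon => (hcon ha).2 haA⟩
        have := Set.ncard_lt_ncard hss S.toFinite
        omega
      obtain ⟨f1, hf1⟩ := ih S1 hS1card
      obtain ⟨f2, hf2⟩ := ih S2 hS2card
      have hCS1 : C ⊆ S1 := Set.subset_union_right
      have hCS2 : C ⊆ S2 := fun x hx => ⟨hCS hx, fun hxA => hxA.1.2 hx⟩
      have hinj1 : Set.InjOn f1 C := by
        intro u hu v hv hcontra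
        by_contra hne
        exact hf1 u (hCS1 hu) v (hCS1 hv) (hclique u hu v hv hne) hcontra
      have hinj2 : Set.InjOn f2 C := by
        intro u hu v hv hcontra
        by_contra hne
        exact hf2 u (hCS2 hu) v (hCS2 hv) (hclique u hu v hv hne) hcontra
      obtain ⟨σ, hσ⟩ := exists_perm_match C hCfin hC2 f1 f2 hinj1 hinj2
      refine ⟨fun x => if x ∈ A then f1 x else σ (f2 x), ?_⟩
      intro u hu w hw hadj
      dsimp only
      by_cases huA : u ∈ A
      · have hwS1 : w ∈ S1 := by
          by_cases hwC : w ∈ C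
          · exact Or.inr hwC
          · exact Or.inl (hclose u huA w hw hwC hadj)
        rcases hwS1 with hwA | hwC
        · rw [if_pos huA, if_pos hwA]
          exact hf1 u (Or.inl huA) w (Or.inl hwA) hadj
        · have hwA : w ∉ A := fun hcon => hcon.1.2 hwC
          rw [if_pos huA, if_neg hwA, hσ w hwC]
          exact hf1 u (Or.inl huA) w (Or.inr hwC) hadj
      · by_cases hwA : w ∈ A
        · -- symmetric: u ∉ A, w ∈ A, so u ∈ C
          have huS1 : u ∈ S1 := by
            by_cases huC : u ∈ C
            · exact Or.inr huC
            · exact absurd (hclose w hwA u hu huC hadj.symm) huA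
          rcases huS1 with huA' | huC
          · exact absurd huA' huA
          · rw [if_neg huA, if_pos hwA, hσ u huC]
            exact hf1 u (Or.inr huC) w (Or.inl hwA) hadj
        · rw [if_neg huA, if_neg hwA]
          intro hcontra
          exact hf2 u ⟨hu, huA⟩ w ⟨hw, hwA⟩ hadj (σ.injective hcontra)
    · -- bipartite
      obtain ⟨col⟩ := hbip
      refine ⟨fun x => if hx : x ∈ S then Fin.castLE (by norm_num) (col ⟨x, hx⟩) else 0, ?_⟩
      intro u hu w hw hadj
      dsimp only
      rw [dif_pos hu, dif_pos hw]
      intro hcontra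
      have hadj' : (G.induce S).Adj ⟨u, hu⟩ ⟨w, hw⟩ := by
        simp [SimpleGraph.comap_adj, hadj]
      exact col.valid hadj' (Fin.castLE_injective _ hcontra)
end

section
/- Let G be a 2-connected graph and C a star cutset of G that is inclusionwise minimal among star cutsets, with center c, and let Y be a connected component of G − C. Then G[C ∪ Y] is 2-connected. -/
/-- C is a star cutset of G with center c: c ∈ C is adjacent to all other vertices of
C, and some two vertices outside C are separated by C. -/
def IsStarCutsetWithCenter {V : Type*} (G : SimpleGraph V) (C : Set V) (c : V) : Prop :=
  c ∈ C ∧ (∀ v ∈ C, v ≠ c → G.Adj c v) ∧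
  ∃ a b : V, a ∉ C ∧ b ∉ C ∧ ∀ W : G.Walk a b, ∃ w ∈ W.support, w ∈ C

/-- A graph is 2-connected: at least 3 vertices, and deleting any vertex leaves it
connected. -/
def TwoConnected {W : Type*} (H : SimpleGraph W) : Prop :=
  3 ≤ Nat.card W ∧ ∀ v : W, (H.induce {v}ᶜ).Connected

section Helpers

variable {V : Type*} {G : SimpleGraph V}

lemma walk_of_induce {A : Set V} {u v : ↥A} (W : (G.induce A).Walk u v) :
    ∃ P : G.Walk u.1 v.1, ∀ w ∈ P.support, w ∈ A := by
  induction W with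
  | nil => exact ⟨SimpleGraph.Walk.nil, by simp⟩
  | @cons a b cc h W ih =>
    obtain ⟨P, hP⟩ := ih
    refine ⟨SimpleGraph.Walk.cons (show G.Adj a.1 b.1 from h) P, ?_⟩
    intro w hw
    rw [SimpleGraph.Walk.support_cons, List.mem_cons] at hw
    rcases hw with h1 | h2
    · exact h1 ▸ a.2
    · exact hP w h2

lemma reachable_induce_of_walk {S : Set V} {u v : V} (P : G.Walk u v)
    (h : ∀ w ∈ P.support, w ∈ S) (hu : u ∈ S) (hv : v ∈ S) :
    (G.induce S).Reachable ⟨u, hu⟩ ⟨v, hv⟩ := by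
  induction P with
  | nil => exact SimpleGraph.Reachable.refl _
  | @cons a b cc hadj W ih =>
    have hb : b ∈ S := h b (by simp)
    have step : (G.induce S).Adj ⟨a, hu⟩ ⟨b, hb⟩ := by
      simp [SimpleGraph.comap_adj, hadj]
    exact (step.reachable).trans (ih (fun w hw => h w (by simp [hw])) hb hv)

lemma connected_induce_anchor {S : Set V} {x0 : V} (h0 : x0 ∈ S)
    (h : ∀ x (hx : x ∈ S), (G.induce S).Reachable ⟨x, hx⟩ ⟨x0, h0⟩) :
    (G.induce S).Connected := by
  rw [SimpleGraph.connected_iff]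
  refine ⟨fun a b => ?_, ⟨⟨x0, h0⟩⟩⟩
  exact (h a.1 a.2).trans (h b.1 b.2).symm

lemma exit_lemma {Y : Set V} : ∀ {y z : V} (W : G.Walk y z), y ∈ Y → z ∉ Y →
    ∃ (w : V) (P : G.Walk y w), w ∉ Y ∧ (∃ u ∈ Y, G.Adj u w) ∧
      (∀ x ∈ P.support, x ∈ Y ∨ x = w) ∧ (∀ x ∈ P.support, x ∈ W.support) := by
  intro y z W
  induction W with
  | nil => intro hy hz; exact absurd hy hz
  | @cons a b cc hadj W ih =>
    intro hy hz
    by_cases hb : b ∈ Y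
    · obtain ⟨w, P, hw, hu, hPY, hPW⟩ := ih hb hz
      refine ⟨w, SimpleGraph.Walk.cons hadj P, hw, hu, ?_, ?_⟩
      · intro x hx
        rw [SimpleGraph.Walk.support_cons, List.mem_cons] at hx
        rcases hx with h1 | h2
        · exact Or.inl (h1 ▸ hy)
        · exact hPY x h2
      · intro x hx
        rw [SimpleGraph.Walk.support_cons, List.mem_cons] at hx
        rw [SimpleGraph.Walk.support_cons, List.mem_cons]
        rcases hx with h1 | h2
        · exact Or.inl h1
        · exact Or.inr (hPW x h2)
    · refine ⟨b, SimpleGraph.Walk.cons hadj SimpleGraph.Walk.nil, hb, ⟨a, hy, hadj⟩, ?_, ?_⟩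
      · intro x hx; simp at hx
        rcases hx with h1 | h2
        · exact Or.inl (h1 ▸ hy)
        · exact Or.inr h2
      · intro x hx; simp at hx
        rw [SimpleGraph.Walk.support_cons, List.mem_cons]
        rcases hx with h1 | h2
        · exact Or.inl h1
        · exact Or.inr (h2 ▸ W.start_mem_support)

lemma induce_induce_connected {S : Set V} (T : Set ↥S)
    (h : (G.induce (Subtype.val '' T)).Connected) : ((G.induce S).induce T).Connected := by
  have iso : (G.induce S).induce T ≃g G.induce (Subtype.val '' T) := by
    refine ⟨Equiv.Set.image _ T Subtype.val_injective, ?_⟩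
    intro a b
    simp only [SimpleGraph.comap_adj, Equiv.Set.image_apply]
    rfl
  exact (iso.connected_iff).mpr h

end Helpers

/-- Let G be 2-connected, C an inclusionwise minimal star cutset with
center c, and Y a connected component of G − C (with |C ∪ Y| ≥ 3). Then G[C ∪ Y] is
2-connected. -/
theorem stmt_12 {V : Type*} [Fintype V] (G : SimpleGraph V)
    (h2conn : TwoConnected G) (C : Set V) (c : V)
    (hstar : IsStarCutsetWithCenter G C c)
    (hmin : ∀ C' : Set V, C' ⊂ C → ∀ c' : V, ¬ IsStarCutsetWithCenter G C' c')
    (Y : Set V) (hYsub : Y ⊆ Cᶜ) (hYne : Y.Nonempty)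
    (hYconn : (G.induce Y).Connected)
    (hYmax : ∀ u ∈ Y, ∀ v ∈ Cᶜ, G.Adj u v → v ∈ Y)
    (hcard : 3 ≤ (C ∪ Y).ncard) :
    TwoConnected (G.induce (C ∪ Y)) := by
  obtain ⟨hcC, hcstar, a, b, haC, hbC, hsep⟩ := hstar
  obtain ⟨y0, hy0⟩ := hYne
  have hy0C : y0 ∉ C := hYsub hy0
  -- reachability inside Y in larger induced graphs
  have reachY : ∀ (S : Set V) (hYS : Y ⊆ S), ∀ u (hu : u ∈ Y) (w : V) (hw : w ∈ Y),
      (G.induce S).Reachable ⟨u, hYS hu⟩ ⟨w, hYS hw⟩ := by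
    intro S hYS u hu w hw
    obtain ⟨W⟩ := hYconn.preconnected ⟨u, hu⟩ ⟨w, hw⟩
    obtain ⟨P, hP⟩ := walk_of_induce W
    exact reachable_induce_of_walk P (fun x hx => hYS (hP x hx)) _ _
  -- a vertex outside C ∪ Y exists
  have hz : ∃ z, z ∉ C ∧ z ∉ Y := by
    by_contra h
    push_neg at h
    have haY : a ∈ Y := h a haC
    have hbY : b ∈ Y := h b hbC
    obtain ⟨W⟩ := hYconn.preconnected ⟨a, haY⟩ ⟨b, hbY⟩
    obtain ⟨P, hP⟩ := walk_of_induce W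
    obtain ⟨w, hwsup, hwC⟩ := hsep P
    exact hYsub (hP w hwsup) hwC
  obtain ⟨z, hzC, hzY⟩ := hz
  -- every vertex of C other than c has a neighbor in Y
  have hnbr : ∀ x ∈ C, x ≠ c → ∃ u ∈ Y, G.Adj u x := by
    intro x hx hxc
    by_contra h
    push_neg at h
    refine hmin (C \ {x}) (Set.sdiff_singleton_ssubset.mpr hx) c
      ⟨⟨hcC, fun hh => hxc (Set.mem_singleton_iff.mp hh).symm⟩,
        fun w hw hwc => hcstar w hw.1 hwc, y0, z, ?_, ?_, ?_⟩
    · exact fun hh => hy0C hh.1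
    · exact fun hh => hzC hh.1
    · intro W
      obtain ⟨w, P, hwY, ⟨u, huY, hadj⟩, _, hPW⟩ := exit_lemma W hy0 hzY
      have hwC : w ∈ C := by
        by_contra hwC
        exact hwY (hYmax u huY w hwC hadj)
      refine ⟨w, hPW w P.end_mem_support, hwC, ?_⟩
      simp only [Set.mem_singleton_iff]
      intro hh
      exact h u huY (hh ▸ hadj)
  constructor
  · simpa [Nat.card_coe_set_eq] using hcard
  · intro v
    apply induce_induce_connected
    have himg : (Subtype.val '' ({v}ᶜ : Set ↥(C ∪ Y))) = (C ∪ Y) \ {(v : V)} := by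
      ext x
      constructor
      · rintro ⟨p, hp, rfl⟩
        refine ⟨p.2, ?_⟩
        simp only [Set.mem_singleton_iff]
        intro hh
        exact hp (Subtype.ext hh)
      · rintro ⟨hxS, hxv⟩
        refine ⟨⟨x, hxS⟩, ?_, rfl⟩
        simp only [Set.mem_compl_iff, Set.mem_singleton_iff] at *
        intro hh
        exact hxv (congrArg Subtype.val hh)
    rw [himg]
    set D : Set V := (C ∪ Y) \ {(v : V)} with hD
    by_cases hvc : (v : V) = c
    · -- deleting the center c : anchor is y0 ∈ Y, D ⊇ Y and every x ∈ C \ {c} has a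
      -- neighbor in Y
      have hYD : Y ⊆ D := by
        intro t ht
        refine ⟨Or.inr ht, ?_⟩
        simp only [Set.mem_singleton_iff]
        intro hh
        exact hYsub ht (hh ▸ hvc ▸ hcC)
      have h0 : y0 ∈ D := hYD hy0
      apply connected_induce_anchor h0
      intro x hx
      obtain ⟨hxS, hxv⟩ := hx
      simp only [Set.mem_singleton_iff] at hxv
      rcases hxS with hxC | hxY
      · obtain ⟨u, huY, hadj⟩ := hnbr x hxC (fun hh => hxv (hh.trans hvc.symm))
        have step : (G.induce D).Adj ⟨x, ⟨Or.inl hxC, by simpa using hxv⟩⟩ ⟨u, hYD huY⟩ := by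
          simp [SimpleGraph.comap_adj, hadj.symm]
        exact (step.reachable).trans (reachY D hYD u huY y0 hy0)
      · exact reachY D hYD x hxY y0 hy0
    · -- deleting a vertex other than c : anchor is c
      have hcD : c ∈ D := ⟨Or.inl hcC, by simpa using fun hh => hvc hh.symm⟩
      have reachC : ∀ x (hx : x ∈ C) (hxv : x ≠ (v : V)),
          (G.induce D).Reachable ⟨x, ⟨Or.inl hx, by simpa using hxv⟩⟩ ⟨c, hcD⟩ := by
        intro x hx hxv
        by_cases hxc : x = c
        · subst hxc; rfl
        · have step : (G.induce D).Adj ⟨x, ⟨Or.inl hx, by simpa using hxv⟩⟩ ⟨c, hcD⟩ := by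
            simp [SimpleGraph.comap_adj, (hcstar x hx hxc).symm]
          exact step.reachable
      apply connected_induce_anchor hcD
      intro x hx
      obtain ⟨hxS, hxv⟩ := hx
      simp only [Set.mem_singleton_iff] at hxv
      rcases hxS with hxC | hxY
      · exact reachC x hxC hxv
      · -- x ∈ Y : walk to z avoiding v, exit through C
        have hzv : z ≠ (v : V) := by
          rcases v.2 with hv | hv
          · exact fun hh => hzC (hh ▸ hv)
          · exact fun hh => hzY (hh ▸ hv)
        obtain ⟨W⟩ := (h2conn.2 (v : V)).preconnected ⟨x, by simpa using hxv⟩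
          ⟨z, by simpa using hzv⟩
        obtain ⟨P, hP⟩ := walk_of_induce W
        obtain ⟨w, Q, hwY, ⟨u, huY, hadj⟩, hQmem, hQP⟩ := exit_lemma P hxY hzY
        have hwC : w ∈ C := by
          by_contra hwC
          exact hwY (hYmax u huY w hwC hadj)
        have hwv : w ≠ (v : V) := by
          have := hP w (hQP w Q.end_mem_support)
          simpa using this
        have hQD : ∀ t ∈ Q.support, t ∈ D := by
          intro t ht
          have htv : t ≠ (v : V) := by simpa using hP t (hQP t ht)
          rcases hQmem t ht with htY | htw
          · exact ⟨Or.inr htY, by simpa using htv⟩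
          · exact htw ▸ ⟨Or.inl hwC, by simpa using hwv⟩
        have rxw : (G.induce D).Reachable ⟨x, ⟨Or.inr hxY, by simpa using hxv⟩⟩
            ⟨w, ⟨Or.inl hwC, by simpa using hwv⟩⟩ :=
          reachable_induce_of_walk Q hQD _ _
        exact rxw.trans (reachC w hwC hwv)
end

section
/- Let G be a 2-connected series-parallel triangle-free graph with no clique cutset, and suppose every vertex of G of degree 2 lies in N[x] ∪ N[y] for some vertices x, y with x = y or xy ∈ E(G). Assume also that every cycle of G contains at least two vertices of degree 2 and that all vertices of (N[x] ∪ N[y]) \ {x,y} have degree 2 and form a stable set. Then the induced subgraph G − (N[x] ∪ N[y]) is a tree. -/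
/-- A graph H is a subdivision of K₄ (four branch vertices joined by six internally
disjoint paths covering all vertices and edges of H). -/
def IsK4Subdivision {W : Type*} (H : SimpleGraph W) : Prop :=
  ∃ (b : Fin 4 → W), Function.Injective b ∧
    ∃ P : ∀ i j : Fin 4, H.Walk (b i) (b j),
      (∀ i j, i ≠ j → (P i j).IsPath) ∧
      (∀ i j, i ≠ j → P j i = (P i j).reverse) ∧
      (∀ i j, i ≠ j → ∀ v ∈ (P i j).support, v ∈ Set.range b → v = b i ∨ v = b j) ∧
      (∀ i j k l, i ≠ j → k ≠ l → s(i, j) ≠ s(k, l) →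
        ∀ v, v ∈ (P i j).support → v ∈ (P k l).support → v ∈ Set.range b) ∧
      (∀ v : W, ∃ i j, i ≠ j ∧ v ∈ (P i j).support) ∧
      (∀ e ∈ H.edgeSet, ∃ i j, i ≠ j ∧ e ∈ (P i j).edges)

/-- G is series-parallel: no subgraph of G is a subdivision of K₄. -/
def SeriesParallel {V : Type*} (G : SimpleGraph V) : Prop :=
  ¬ ∃ H : G.Subgraph, IsK4Subdivision H.coe

/-- Let G be a 2-connected, series-parallel, triangle-free graph with no
clique cutset, and x, y vertices with x = y or xy ∈ E(G), such that every vertex of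
degree 2 lies in N[x] ∪ N[y], every cycle of G contains at least two vertices of
degree 2, and all vertices of (N[x] ∪ N[y]) \ {x, y} have degree 2 and form a stable
set. Then G − (N[x] ∪ N[y]) is a tree. -/
theorem stmt_19 {V : Type*} [Fintype V] [DecidableEq V] (G : SimpleGraph V)
    [DecidableRel G.Adj]
    (htf : G.CliqueFree 3)
    (hcard : 3 ≤ Fintype.card V)
    (h2conn : ∀ v : V, (G.induce {v}ᶜ).Connected)
    (hsp : SeriesParallel G)
    (hnocc : ¬ ∃ K : Set V, (∀ u ∈ K, ∀ v ∈ K, u ≠ v → G.Adj u v) ∧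
      ∃ a b : V, a ∉ K ∧ b ∉ K ∧ ∀ W : G.Walk a b, ∃ c ∈ W.support, c ∈ K)
    (x y : V) (hxy : x = y ∨ G.Adj x y)
    (hdeg2 : ∀ v : V, G.degree v = 2 →
      v ∈ insert x (G.neighborSet x) ∪ insert y (G.neighborSet y))
    (hcycdeg2 : ∀ (r : V) (C : G.Walk r r), C.IsCycle →
      ∃ u v : V, u ∈ C.support ∧ v ∈ C.support ∧ u ≠ v ∧
        G.degree u = 2 ∧ G.degree v = 2)
    (hnbrdeg : ∀ v ∈ (insert x (G.neighborSet x) ∪ insert y (G.neighborSet y)) \ {x, y},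
      G.degree v = 2)
    (hstable : ∀ u ∈ (insert x (G.neighborSet x) ∪ insert y (G.neighborSet y)) \ {x, y},
      ∀ v ∈ (insert x (G.neighborSet x) ∪ insert y (G.neighborSet y)) \ {x, y},
      ¬ G.Adj u v) :
    (G.induce ((insert x (G.neighborSet x) ∪ insert y (G.neighborSet y))ᶜ)).IsTree := by
  classical
  set S : Set V := insert x (G.neighborSet x) ∪ insert y (G.neighborSet y) with hSdef
  have hxS : x ∈ S := Or.inl (Set.mem_insert _ _)
  have hyS : y ∈ S := Or.inr (Set.mem_insert _ _)
  have hmemS : ∀ v : V, v ∈ S ↔ (v = x ∨ G.Adj x v ∨ v = y ∨ G.Adj y v) := by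
    intro v
    simp only [hSdef, Set.mem_union, Set.mem_insert_iff, SimpleGraph.mem_neighborSet]
    tauto
  -- helper: pick an element distinct from two given ones
  have hpick : ∀ a b : V, ∃ c : V, c ≠ a ∧ c ≠ b := by
    intro a b
    by_contra hc
    push_neg at hc
    have hsub : (Finset.univ : Finset V) ⊆ {a, b} := by
      intro c _
      simp only [Finset.mem_insert, Finset.mem_singleton]
      rcases eq_or_ne c a with h | h
      · exact Or.inl h
      · exact Or.inr (hc c h)
    have h1 := Finset.card_le_card hsub
    have h2 : ({a, b} : Finset V).card ≤ 2 :=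
      (Finset.card_insert_le _ _).trans (by simp)
    rw [Finset.card_univ] at h1
    omega
  -- helper: three distinct neighbors impossible for a degree-2 vertex
  have hthree : ∀ v z a w : V, G.degree v = 2 → G.Adj v z → G.Adj v a → G.Adj v w →
      z ≠ a → z ≠ w → a = w := by
    intro v z a w hd h1 h2 h3 hza hzw
    by_contra haw
    have hsub : ({z, a, w} : Finset V) ⊆ G.neighborFinset v := by
      intro t ht
      simp only [Finset.mem_insert, Finset.mem_singleton] at ht
      rw [SimpleGraph.mem_neighborFinset]
      rcases ht with rfl | rfl | rfl <;> assumption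
    have hc3 : ({z, a, w} : Finset V).card = 3 := by
      rw [Finset.card_insert_of_notMem (by simp [hza, hzw]),
        Finset.card_insert_of_notMem (by simp [haw]), Finset.card_singleton]
    have := Finset.card_le_card hsub
    rw [hc3, SimpleGraph.card_neighborFinset_eq_degree, hd] at this
    omega
  -- helper: a degree-2 vertex with a known neighbor has a second neighbor
  have hsecond : ∀ v z : V, G.degree v = 2 → G.Adj v z → ∃ w : V, G.Adj v w ∧ w ≠ z := by
    intro v z hd h1
    have hlt : 1 < (G.neighborFinset v).card := by
      rw [SimpleGraph.card_neighborFinset_eq_degree, hd]; omega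
    obtain ⟨w, hw, hwz⟩ := Finset.exists_mem_ne hlt z
    exact ⟨w, (SimpleGraph.mem_neighborFinset _ _ _).mp hw, hwz⟩
  -- x has a neighbor distinct from y
  have hnx : ∃ m : V, G.Adj x m ∧ m ≠ y := by
    by_contra hc
    push_neg at hc
    rcases eq_or_ne x y with rfl | hxyne
    · obtain ⟨v, hvx, -⟩ := hpick x x
      obtain ⟨u, hux, huv⟩ := hpick x v
      have hx' : x ∈ ({v} : Set V)ᶜ := by simp [Ne.symm hvx]
      have hu' : u ∈ ({v} : Set V)ᶜ := by simp [huv]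
      obtain ⟨W⟩ := (h2conn v).preconnected ⟨x, hx'⟩ ⟨u, hu'⟩
      have hne : (⟨x, hx'⟩ : ↥({v} : Set V)ᶜ) ≠ ⟨u, hu'⟩ := by
        simp [Ne.symm hux]
      obtain ⟨c, hadj, W', hW'⟩ :=
        SimpleGraph.Walk.not_nil_iff.mp (SimpleGraph.Walk.not_nil_of_ne (p := W) hne)
      have hadj' : G.Adj x c.val := hadj
      exact hadj'.ne (hc c.val hadj').symm
    · obtain ⟨v, hvx, hvy⟩ := hpick x y
      have hx' : x ∈ ({y} : Set V)ᶜ := by simp [hxyne]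
      have hv' : v ∈ ({y} : Set V)ᶜ := by simp [hvy]
      obtain ⟨W⟩ := (h2conn y).preconnected ⟨x, hx'⟩ ⟨v, hv'⟩
      have hne : (⟨x, hx'⟩ : ↥({y} : Set V)ᶜ) ≠ ⟨v, hv'⟩ := by
        simp [Ne.symm hvx]
      obtain ⟨c, hadj, W', hW'⟩ :=
        SimpleGraph.Walk.not_nil_iff.mp (SimpleGraph.Walk.not_nil_of_ne (p := W) hne)
      have hadj' : G.Adj x c.val := hadj
      have hcy := hc c.val hadj'
      exact c.2 (by simp [hcy])
  -- Sᶜ is nonempty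
  obtain ⟨m, hxm, hmy⟩ := hnx
  have hmx : m ≠ x := hxm.ne'
  have hmS : m ∈ S := (hmemS m).mpr (Or.inr (Or.inl hxm))
  have hmM : m ∈ S \ ({x, y} : Set V) := ⟨hmS, by simp [hmx, hmy]⟩
  have hdm : G.degree m = 2 := hnbrdeg m hmM
  obtain ⟨w, hmw, hwx⟩ := hsecond m x hdm hxm.symm
  have hwS : w ∉ S := by
    intro hwS'
    have hwy : w ≠ y := by
      rintro rfl
      rcases hxy with rfl | hadjxy
      · exact hwx rfl
      · exact htf {x, w, m} (SimpleGraph.is3Clique_triple_iff.mpr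
          ⟨hadjxy, hxm, hmw.symm⟩)
    have hwM : w ∈ S \ ({x, y} : Set V) := ⟨hwS', by simp [hwx, hwy]⟩
    exact hstable m hmM w hwM hmw
  have hne : Nonempty ↥(Sᶜ) := ⟨⟨w, hwS⟩⟩
  -- the key walk lemma
  have key : ∀ n : ℕ, ∀ (a b : V) (ha : a ∈ Sᶜ) (hb : b ∈ Sᶜ) (W : G.Walk a b),
      W.length ≤ n → (∀ c ∈ W.support, c ≠ x ∧ c ≠ y) →
      (G.induce Sᶜ).Reachable ⟨a, ha⟩ ⟨b, hb⟩ := by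
    intro n
    induction n with
    | zero =>
      intro a b ha hb W hlen hsupp
      cases W with
      | nil => exact SimpleGraph.Reachable.refl _
      | cons h W' => simp [SimpleGraph.Walk.length_cons] at hlen
    | succ n IH =>
      intro a b ha hb W hlen hsupp
      cases W with
      | nil => exact SimpleGraph.Reachable.refl _
      | @cons _ v _ h W' =>
        have hvxy : v ≠ x ∧ v ≠ y := hsupp v (by
          simp [SimpleGraph.Walk.support_cons, SimpleGraph.Walk.start_mem_support])
        by_cases hv : v ∈ Sᶜ
        · have hadj : (G.induce Sᶜ).Adj ⟨a, ha⟩ ⟨v, hv⟩ := h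
          refine hadj.reachable.trans (IH v b hv hb W' ?_ ?_)
          · have : W'.length + 1 ≤ n + 1 := by
              simpa [SimpleGraph.Walk.length_cons] using hlen
            omega
          · intro c hc
            exact hsupp c (by simp [SimpleGraph.Walk.support_cons]; exact Or.inr hc)
        · have hvS : v ∈ S := by simpa using hv
          cases W' with
          | nil => exact absurd hb hv
          | @cons _ w' _ h2 W'' =>
            have hwxy : w' ≠ x ∧ w' ≠ y := hsupp w' (by
              simp [SimpleGraph.Walk.support_cons, SimpleGraph.Walk.start_mem_support])
            obtain ⟨z, hz, hzxy⟩ : ∃ z : V, G.Adj v z ∧ (z = x ∨ z = y) := by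
              rcases (hmemS v).mp hvS with h' | h' | h' | h'
              · exact absurd h' hvxy.1
              · exact ⟨x, h'.symm, Or.inl rfl⟩
              · exact absurd h' hvxy.2
              · exact ⟨y, h'.symm, Or.inr rfl⟩
            have hdv : G.degree v = 2 :=
              hnbrdeg v ⟨hvS, by simp [hvxy.1, hvxy.2]⟩
            have hza : z ≠ a := by
              rintro rfl
              rcases hzxy with rfl | rfl
              · exact ha hxS
              · exact ha hyS
            have hzw : z ≠ w' := by
              rintro rfl
              rcases hzxy with rfl | rfl
              · exact hwxy.1 rfl
              · exact hwxy.2 rfl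
            have haw : a = w' := hthree v z a w' hdv hz h.symm h2 hza hzw
            subst haw
            refine IH a b ha hb W'' ?_ ?_
            · have : W''.length + 1 + 1 ≤ n + 1 := by
                simpa [SimpleGraph.Walk.length_cons] using hlen
              omega
            · intro c hc
              refine hsupp c ?_
              simp only [SimpleGraph.Walk.support_cons, List.mem_cons]
              exact Or.inr (Or.inr hc)
  -- acyclicity
  have hacyc : (G.induce Sᶜ).IsAcyclic := by
    intro r c hc
    have hinj : Function.Injective (SimpleGraph.Embedding.induce (G := G) Sᶜ).toHom :=
      (SimpleGraph.Embedding.induce (G := G) Sᶜ).injective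
    have hcyc : (c.map (SimpleGraph.Embedding.induce (G := G) Sᶜ).toHom).IsCycle := hc.map hinj
    obtain ⟨u, v, hu, -, -, hdu, -⟩ := hcycdeg2 r.val _ hcyc
    replace hu : u ∈ (c.map (SimpleGraph.Embedding.induce (G := G) Sᶜ).toHom).support := hu
    rw [SimpleGraph.Walk.support_map] at hu
    obtain ⟨u', -, rfl⟩ := List.mem_map.mp hu
    exact u'.2 (hdeg2 _ hdu)
  -- connectivity
  have hpre : (G.induce Sᶜ).Preconnected := by
    intro a b
    by_contra hr
    apply hnocc
    refine ⟨{x, y}, ?_, a.val, b.val, ?_, ?_, ?_⟩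
    · intro u hu v hv huv
      simp only [Set.mem_insert_iff, Set.mem_singleton_iff] at hu hv
      rcases hu with rfl | rfl <;> rcases hv with rfl | rfl
      · exact absurd rfl huv
      · rcases hxy with h | h
        · exact absurd h huv
        · exact h
      · rcases hxy with h | h
        · exact absurd h.symm huv
        · exact h.symm
      · exact absurd rfl huv
    · simp only [Set.mem_insert_iff, Set.mem_singleton_iff]
      rintro (h | h)
      · exact a.2 (show (a.val : V) ∈ S by rw [h]; exact hxS)
      · exact a.2 (show (a.val : V) ∈ S by rw [h]; exact hyS)
    · simp only [Set.mem_insert_iff, Set.mem_singleton_iff]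
      rintro (h | h)
      · exact b.2 (show (b.val : V) ∈ S by rw [h]; exact hxS)
      · exact b.2 (show (b.val : V) ∈ S by rw [h]; exact hyS)
    · intro W
      by_contra hW
      push_neg at hW
      refine hr ?_
      have := key W.length a.val b.val a.2 b.2 W le_rfl ?_
      · exact this
      · intro c hc
        have := hW c hc
        simp only [Set.mem_insert_iff, Set.mem_singleton_iff] at this
        push_neg at this
        exact this
  exact ⟨(SimpleGraph.connected_iff _).mpr ⟨hpre, hne⟩, hacyc⟩
end
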